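/- Let A = (a_{i,j}) be a k×k strictly upper triangular integer matrix and T_A the associated triangular operator. For nonnegative integers r_1,…,r_k with Σ r_i = k, one has T_A(x_1^{r_1} ⋯ x_k^{r_k}) = Σ_{(c_{i,j}) ∈ C(r_1,…,r_k)} Π_j (Σ_i c_{i,j})! · Π_{i,j} a_{i,j}^{c_{i,j}} / c_{i,j}!, where C(r_1,…,r_k) is the set of strictly upper triangular k×k matrices (c_{i,j}) with nonnegative integer entries satisfying Σ_s c_{s,i} = r_i − 1 + Σ_j c_{i,j} for each 1 ≤ i ≤ k. -/

import Mathlib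

open MvPolynomial

/-- One elimination step of the triangular operator: writing `f = Σ_r h_r · x_k^r`
(`x_k` the last variable), it returns `Σ_{r ≥ 1} h_r · (a_{1,k}x_1 + ⋯ + a_{k-1,k}x_{k-1})^{r-1}`. -/
noncomputable def triStep (k : ℕ) (A : ℕ → ℕ → ℤ) (f : MvPolynomial (Fin (k + 1)) ℤ) :
    MvPolynomial (Fin k) ℤ :=
  f.support.sum fun m =>
    if m (Fin.last k) = 0 then 0
    else
      MvPolynomial.C (f.coeff m) *
        MvPolynomial.monomial (Finsupp.equivFunOnFinite.symm fun i : Fin k => m (Fin.castSucc i)) 1 *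
        (∑ i : Fin k, MvPolynomial.C (A i k) * MvPolynomial.X i) ^ (m (Fin.last k) - 1)

/-- The triangular operator `T_A` of Definition 2, associated to a strictly upper
triangular integer matrix `A = (a_{i,j})` (indexed here from `0`). -/
noncomputable def Tri : (k : ℕ) → (A : ℕ → ℕ → ℤ) → MvPolynomial (Fin k) ℤ → ℤ
  | 0, _, f => f.coeff 0
  | (k + 1), A, f => Tri k A (triStep k A f)

lemma triStep_eq_sum (k : ℕ) (A : ℕ → ℕ → ℤ) (f : MvPolynomial (Fin (k + 1)) ℤ) :
    triStep k A f = (AddMonoidAlgebra.coeff f).sum fun m c =>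
      if m (Fin.last k) = 0 then 0
      else
        MvPolynomial.C c *
          MvPolynomial.monomial (Finsupp.equivFunOnFinite.symm fun i : Fin k => m (Fin.castSucc i)) 1 *
          (∑ i : Fin k, MvPolynomial.C (A i k) * MvPolynomial.X i) ^ (m (Fin.last k) - 1) := rfl

lemma triStep_zero (k : ℕ) (A : ℕ → ℕ → ℤ) : triStep k A 0 = 0 := by
  simp [triStep_eq_sum]

lemma triStep_add (k : ℕ) (A : ℕ → ℕ → ℤ) (f g : MvPolynomial (Fin (k + 1)) ℤ) :
    triStep k A (f + g) = triStep k A f + triStep k A g := by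
  simp only [triStep_eq_sum]
  rw [AddMonoidAlgebra.coeff_add]
  apply Finsupp.sum_add_index' <;> intros <;> split <;> simp [add_mul]

lemma Tri_zero (k : ℕ) (A : ℕ → ℕ → ℤ) : Tri k A 0 = 0 := by
  induction k with
  | zero => simp [Tri]
  | succ k ih => simp [Tri, triStep_zero, ih]

lemma Tri_add (k : ℕ) (A : ℕ → ℕ → ℤ) (f g : MvPolynomial (Fin k) ℤ) :
    Tri k A (f + g) = Tri k A f + Tri k A g := by
  induction k with
  | zero => simp [Tri]
  | succ k ih => simp [Tri, triStep_add, ih]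

lemma Tri_sum {ι : Type*} (k : ℕ) (A : ℕ → ℕ → ℤ) (s : Finset ι)
    (f : ι → MvPolynomial (Fin k) ℤ) :
    Tri k A (∑ i ∈ s, f i) = ∑ i ∈ s, Tri k A (f i) := by
  classical
  induction s using Finset.induction with
  | empty => simp [Tri_zero]
  | insert a s h ih => rw [Finset.sum_insert h, Tri_add, ih, Finset.sum_insert h]

lemma triStep_monomial (k : ℕ) (A : ℕ → ℕ → ℤ) (m : Fin (k+1) →₀ ℕ) (z : ℤ) :
    triStep k A (MvPolynomial.monomial m z) =
      if m (Fin.last k) = 0 then 0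
      else
        MvPolynomial.C z *
          MvPolynomial.monomial (Finsupp.equivFunOnFinite.symm fun i : Fin k => m (Fin.castSucc i)) 1 *
          (∑ i : Fin k, MvPolynomial.C (A i k) * MvPolynomial.X i) ^ (m (Fin.last k) - 1) := by
  rcases eq_or_ne z 0 with rfl | hz
  · rw [map_zero, triStep_zero]
    split <;> simp
  · rw [triStep, MvPolynomial.support_monomial, if_neg hz, Finset.sum_singleton,
      MvPolynomial.coeff_monomial, if_pos rfl]


def triSet (k : ℕ) (r : Fin k → ℕ) : Set (Fin k → Fin k → ℕ) :=
  {c : Fin k → Fin k → ℕ |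
      (∀ i j : Fin k, j ≤ i → c i j = 0) ∧
      ∀ i : Fin k, (∑ s, (c s i : ℤ)) = (r i : ℤ) - 1 + ∑ j, (c i j : ℤ)}

noncomputable def triWt (A : ℕ → ℕ → ℤ) (k : ℕ) (c : Fin k → Fin k → ℕ) : ℚ :=
  (∏ j : Fin k, (Nat.factorial (∑ i, c i j) : ℚ)) *
    ∏ i : Fin k, ∏ j : Fin k, (A i j : ℚ) ^ (c i j) / (Nat.factorial (c i j) : ℚ)

def ext1 (k : ℕ) (d : Fin k → ℕ) (c : Fin k → Fin k → ℕ) : Fin (k+1) → Fin (k+1) → ℕ :=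
  fun i j =>
    if hi : i = Fin.last k then 0
    else if hj : j = Fin.last k then d (i.castPred hi) else c (i.castPred hi) (j.castPred hj)

@[simp] lemma ext1_last (k d c) (j : Fin (k+1)) : ext1 k d c (Fin.last k) j = 0 := by
  simp [ext1]

@[simp] lemma ext1_cs_last (k d c) (i : Fin k) :
    ext1 k d c (Fin.castSucc i) (Fin.last k) = d i := by
  simp [ext1, (Fin.castSucc_lt_last i).ne]

@[simp] lemma ext1_cs_cs (k d c) (i j : Fin k) :
    ext1 k d c (Fin.castSucc i) (Fin.castSucc j) = c i j := by
  simp [ext1, (Fin.castSucc_lt_last i).ne, (Fin.castSucc_lt_last j).ne]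

lemma ext1_injective (k d) : Function.Injective (ext1 k d) := by
  intro c c' h
  funext i j
  have := congrFun (congrFun h (Fin.castSucc i)) (Fin.castSucc j)
  simpa using this

lemma triSet_empty (k : ℕ) (r : Fin (k+1) → ℕ) (h : r (Fin.last k) = 0) :
    triSet (k+1) r = ∅ := by
  ext c
  simp only [triSet, Set.mem_setOf_eq, Set.mem_empty_iff_false, iff_false, not_and]
  intro htri hcon
  have h1 := hcon (Fin.last k)
  have h2 : ∀ j, c (Fin.last k) j = 0 := fun j => htri _ j (Fin.le_last j)
  have h3 : (0:ℤ) ≤ ∑ s, (c s (Fin.last k) : ℤ) :=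
    Finset.sum_nonneg fun s _ => by positivity
  rw [h] at h1
  simp [h2] at h1
  omega

lemma triSet_decomp (k : ℕ) (r : Fin (k+1) → ℕ) (n : ℕ) (h : r (Fin.last k) = n + 1) :
    triSet (k+1) r =
      ⋃ d ∈ (Finset.piAntidiag (Finset.univ : Finset (Fin k)) n : Set (Fin k → ℕ)),
        ext1 k d '' triSet k (fun i => r (Fin.castSucc i) + d i) := by
  ext c
  simp only [Set.mem_iUnion, Set.mem_image, Finset.mem_coe, Finset.mem_piAntidiag]
  constructor
  · rintro ⟨htri, hcon⟩
    have hlastrow : ∀ j, c (Fin.last k) j = 0 := fun j => htri _ j (Fin.le_last j)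
    set d : Fin k → ℕ := fun i => c (Fin.castSucc i) (Fin.last k) with hd
    set c' : Fin k → Fin k → ℕ := fun i j => c (Fin.castSucc i) (Fin.castSucc j) with hc'
    have hcol : ∀ j : Fin (k+1), (∑ s, (c s j : ℤ)) = ∑ s : Fin k, (c (Fin.castSucc s) j : ℤ) := by
      intro j
      rw [Fin.sum_univ_castSucc]
      simp [hlastrow]
    have hdsum : ∑ i, d i = n := by
      have h1 := hcon (Fin.last k)
      rw [hcol, h] at h1
      simp only [hlastrow, Nat.cast_zero, Finset.sum_const_zero, add_zero] at h1
      have : ((∑ i, d i : ℕ) : ℤ) = n := by push_cast [hd]; omega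
      exact_mod_cast this
    refine ⟨d, ⟨hdsum, fun _ _ => Finset.mem_univ _⟩, c', ⟨?_, ?_⟩, ?_⟩
    · intro i j hij
      exact htri _ _ (by simpa using hij)
    · intro i
      have h1 := hcon (Fin.castSucc i)
      rw [hcol] at h1
      rw [Fin.sum_univ_castSucc (f := fun j => (c (Fin.castSucc i) j : ℤ))] at h1
      push_cast
      push_cast at h1
      rw [h1]
      ring
    · funext i j
      rcases eq_or_ne i (Fin.last k) with rfl | hi
      · simp [hlastrow]
      · rcases eq_or_ne j (Fin.last k) with rfl | hj
        · rw [← Fin.castSucc_castPred i hi, ext1_cs_last]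
        · rw [← Fin.castSucc_castPred i hi, ← Fin.castSucc_castPred j hj, ext1_cs_cs]
  · rintro ⟨d, ⟨hdsum, -⟩, c', ⟨htri, hcon⟩, rfl⟩
    constructor
    · intro i j hij
      rcases eq_or_ne i (Fin.last k) with rfl | hi
      · simp
      · have hj : j ≠ Fin.last k := by
          intro hj; subst hj; exact hi (Fin.le_antisymm (Fin.le_last i) hij)
        rw [← Fin.castSucc_castPred i hi, ← Fin.castSucc_castPred j hj, ext1_cs_cs]
        exact htri _ _ (by
          rw [← Fin.castSucc_le_castSucc_iff, Fin.castSucc_castPred, Fin.castSucc_castPred]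
          exact hij)
    · intro i
      rcases eq_or_ne i (Fin.last k) with rfl | hi
      · rw [Fin.sum_univ_castSucc (f := fun s => (ext1 k d c' s (Fin.last k) : ℤ))]
        rw [Fin.sum_univ_castSucc (f := fun j => (ext1 k d c' (Fin.last k) j : ℤ))]
        simp only [ext1_cs_last, ext1_last, h]
        push_cast [← hdsum]
        simp
      · rw [← Fin.castSucc_castPred i hi]
        set i' := i.castPred hi
        rw [Fin.sum_univ_castSucc (f := fun s => (ext1 k d c' s (Fin.castSucc i') : ℤ))]
        rw [Fin.sum_univ_castSucc (f := fun j => (ext1 k d c' (Fin.castSucc i') j : ℤ))]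
        have h1 := hcon i'
        push_cast at h1 ⊢ <;> skip
        simp only [ext1_cs_cs, ext1_cs_last, ext1_last, Nat.cast_zero, add_zero]
        rw [h1]
        ring

lemma triSet_finite (k : ℕ) (r : Fin k → ℕ) : (triSet k r).Finite := by
  induction k with
  | zero => exact Set.toFinite _
  | succ k ih =>
    rcases Nat.eq_zero_or_pos (r (Fin.last k)) with h0 | hpos
    · rw [triSet_empty k r h0]; exact Set.finite_empty
    · obtain ⟨n, hn⟩ : ∃ n, r (Fin.last k) = n + 1 :=
        ⟨r (Fin.last k) - 1, by omega⟩
      rw [triSet_decomp k r n hn]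
      exact Set.Finite.biUnion (Finset.finite_toSet _)
        fun d _ => (ih _).image _

lemma triWt_ext1 (A : ℕ → ℕ → ℤ) (k : ℕ) (n : ℕ) (d : Fin k → ℕ) (c : Fin k → Fin k → ℕ)
    (hd : ∑ i, d i = n) :
    triWt A (k+1) (ext1 k d c) =
      ((n.factorial : ℚ) * ∏ i : Fin k, (A i k : ℚ) ^ (d i) / (Nat.factorial (d i) : ℚ)) *
        triWt A k c := by
  unfold triWt
  rw [Fin.prod_univ_castSucc
    (f := fun j => (Nat.factorial (∑ i, ext1 k d c i j) : ℚ))]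
  rw [Fin.prod_univ_castSucc
    (f := fun i => ∏ j : Fin (k+1), (A i j : ℚ) ^ (ext1 k d c i j) / (Nat.factorial (ext1 k d c i j) : ℚ))]
  have hcolsum : ∀ j : Fin k, (∑ i, ext1 k d c i (Fin.castSucc j)) = ∑ i, c i j := by
    intro j
    rw [Fin.sum_univ_castSucc (f := fun i => ext1 k d c i (Fin.castSucc j))]
    simp
  have hlastcol : (∑ i, ext1 k d c i (Fin.last k)) = n := by
    rw [Fin.sum_univ_castSucc (f := fun i => ext1 k d c i (Fin.last k))]
    simp [hd]
  have hrow : ∀ i : Fin k,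
      (∏ j : Fin (k+1), (A (Fin.castSucc i) j : ℚ) ^ (ext1 k d c (Fin.castSucc i) j) /
        (Nat.factorial (ext1 k d c (Fin.castSucc i) j) : ℚ)) =
      ((A i k : ℚ) ^ (d i) / (Nat.factorial (d i) : ℚ)) *
        ∏ j : Fin k, (A i j : ℚ) ^ (c i j) / (Nat.factorial (c i j) : ℚ) := by
    intro i
    rw [Fin.prod_univ_castSucc
      (f := fun j => (A (Fin.castSucc i) j : ℚ) ^ (ext1 k d c (Fin.castSucc i) j) /
        (Nat.factorial (ext1 k d c (Fin.castSucc i) j) : ℚ))]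
    simp only [ext1_cs_cs, ext1_cs_last, Fin.coe_castSucc, Fin.val_last]
    ring
  simp only [hcolsum, hlastcol, hrow, ext1_last]
  simp only [pow_zero, Nat.factorial_zero, Nat.cast_one, div_one, Finset.prod_const_one, mul_one]
  rw [Finset.prod_mul_distrib]
  ring

lemma finsum_decomp (A : ℕ → ℕ → ℤ) (k : ℕ) (r : Fin (k+1) → ℕ) (n : ℕ)
    (h : r (Fin.last k) = n + 1) :
    (∑ᶠ c ∈ triSet (k+1) r, triWt A (k+1) c) =
      ∑ d ∈ Finset.piAntidiag (Finset.univ : Finset (Fin k)) n,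
        ((n.factorial : ℚ) * ∏ i : Fin k, (A i k : ℚ) ^ (d i) / (Nat.factorial (d i) : ℚ)) *
          ∑ᶠ c ∈ triSet k (fun i => r (Fin.castSucc i) + d i), triWt A k c := by
  rw [triSet_decomp k r n h]
  have hdisj : (↑(Finset.piAntidiag (Finset.univ : Finset (Fin k)) n) :
      Set (Fin k → ℕ)).PairwiseDisjoint
      (fun d => ext1 k d '' triSet k (fun i => r (Fin.castSucc i) + d i)) := by
    intro d _ d' _ hdd'
    rw [Function.onFun, Set.disjoint_left]
    rintro x ⟨c, _, rfl⟩ ⟨c', _, hx⟩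
    apply hdd'
    funext i
    have := congrFun (congrFun hx (Fin.castSucc i)) (Fin.last k)
    simpa using this.symm
  rw [finsum_mem_biUnion hdisj (Finset.finite_toSet _)
    (fun d _ => ((triSet_finite k _).image _))]
  rw [finsum_mem_coe_finset]
  refine Finset.sum_congr rfl fun d hd => ?_
  rw [Finset.mem_piAntidiag] at hd
  rw [finsum_mem_image ((ext1_injective k d).injOn)]
  have : ∀ c ∈ triSet k (fun i => r (Fin.castSucc i) + d i),
      triWt A (k+1) (ext1 k d c) =
        ((n.factorial : ℚ) * ∏ i : Fin k, (A i k : ℚ) ^ (d i) / (Nat.factorial (d i) : ℚ)) *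
          triWt A k c := fun c _ => triWt_ext1 A k n d c hd.1
  rw [finsum_mem_congr rfl this]
  rw [finsum_mem_eq_finite_toFinset_sum _ (triSet_finite k _),
    finsum_mem_eq_finite_toFinset_sum _ (triSet_finite k _), Finset.mul_sum]

lemma prod_X_pow (k : ℕ) (r : Fin k → ℕ) :
    (∏ j, (MvPolynomial.X j : MvPolynomial (Fin k) ℤ) ^ r j) =
      MvPolynomial.monomial (Finsupp.equivFunOnFinite.symm r) 1 := by
  have h1 : ∏ a ∈ (Finsupp.equivFunOnFinite.symm r).support,
      (X a : MvPolynomial (Fin k) ℤ) ^ (Finsupp.equivFunOnFinite.symm r) a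
      = ∏ a : Fin k, (X a : MvPolynomial (Fin k) ℤ) ^ (Finsupp.equivFunOnFinite.symm r) a :=
    Finset.prod_subset (Finset.subset_univ _) fun x _ hx => by
      rw [Finsupp.notMem_support_iff.mp hx, pow_zero]
  rw [monomial_eq, C_1, one_mul, Finsupp.prod, h1]
  simp

lemma Tri_monomial_eq (k : ℕ) :
    ∀ (A : ℕ → ℕ → ℤ) (r : Fin k → ℕ) (z : ℤ), (∑ i, r i = k) →
    ((Tri k A (MvPolynomial.monomial (Finsupp.equivFunOnFinite.symm r) z) : ℤ) : ℚ)
      = (z : ℚ) * ∑ᶠ c ∈ triSet k r, triWt A k c := by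
  induction k with
  | zero =>
    intro A r z _
    have h1 : Tri 0 A (MvPolynomial.monomial (Finsupp.equivFunOnFinite.symm r) z) = z := by
      show MvPolynomial.coeff 0 _ = z
      rw [Subsingleton.elim (Finsupp.equivFunOnFinite.symm r) 0, MvPolynomial.coeff_monomial,
        if_pos rfl]
    rw [h1]
    have h2 : triSet 0 r = Set.univ := by
      ext c; simp [triSet]
    rw [h2, finsum_mem_univ]
    have h3 : ∀ c : Fin 0 → Fin 0 → ℕ, triWt A 0 c = 1 := by
      intro c; simp [triWt]
    simp [h3, finsum_unique]
  | succ k ih =>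
    intro A r z hsum
    show ((Tri k A (triStep k A _) : ℤ) : ℚ) = _
    rw [triStep_monomial]
    rw [Finsupp.coe_equivFunOnFinite_symm]
    rcases Nat.eq_zero_or_pos (r (Fin.last k)) with h0 | hpos
    · rw [if_pos h0, Tri_zero, triSet_empty k r h0, finsum_mem_empty]
      simp
    · obtain ⟨n, hn⟩ : ∃ n, r (Fin.last k) = n + 1 := ⟨r (Fin.last k) - 1, by omega⟩
      rw [if_neg (by omega), hn]
      simp only [Nat.add_sub_cancel]
      rw [Finset.sum_pow_eq_sum_piAntidiag Finset.univ (fun i : Fin k => C (A i k) * X i) n,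
        Finset.mul_sum]
      have hterm : ∀ d ∈ Finset.piAntidiag (Finset.univ : Finset (Fin k)) n,
          (C z : MvPolynomial (Fin k) ℤ) *
            (monomial (Finsupp.equivFunOnFinite.symm fun i : Fin k => r (Fin.castSucc i))) 1 *
            ((Nat.multinomial Finset.univ d : MvPolynomial (Fin k) ℤ) *
              ∏ i : Fin k, (C (A i k) * X i) ^ d i) =
          monomial (Finsupp.equivFunOnFinite.symm fun i : Fin k => r (Fin.castSucc i) + d i)
            (z * (Nat.multinomial Finset.univ d : ℤ) * ∏ i : Fin k, (A i k) ^ d i) := by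
        intro d _
        have e1 : (∏ i : Fin k, ((C (A i k) : MvPolynomial (Fin k) ℤ) * X i) ^ d i) =
            C (∏ i : Fin k, (A i k) ^ d i) *
              monomial (Finsupp.equivFunOnFinite.symm d) 1 := by
          rw [← prod_X_pow k d, map_prod, ← Finset.prod_mul_distrib]
          exact Finset.prod_congr rfl fun i _ => by rw [mul_pow, map_pow]
        have e2 : ((Nat.multinomial Finset.univ d : MvPolynomial (Fin k) ℤ)) =
            C ((Nat.multinomial Finset.univ d : ℤ)) := by
          push_cast
          rfl
        have e3 : (Finsupp.equivFunOnFinite.symm fun i : Fin k => r (Fin.castSucc i)) +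
            Finsupp.equivFunOnFinite.symm d =
            Finsupp.equivFunOnFinite.symm fun i : Fin k => r (Fin.castSucc i) + d i := by
          ext a; simp
        rw [e1, e2, ← e3]
        calc (C z : MvPolynomial (Fin k) ℤ) *
              (monomial (Finsupp.equivFunOnFinite.symm fun i : Fin k => r (Fin.castSucc i))) 1 *
              (C ((Nat.multinomial Finset.univ d : ℤ)) *
                (C (∏ i : Fin k, (A i k) ^ d i) * (monomial (Finsupp.equivFunOnFinite.symm d)) 1))
            = (C z * C ((Nat.multinomial Finset.univ d : ℤ)) * C (∏ i : Fin k, (A i k) ^ d i)) *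
              ((monomial (Finsupp.equivFunOnFinite.symm fun i : Fin k => r (Fin.castSucc i))) 1 *
                (monomial (Finsupp.equivFunOnFinite.symm d)) 1) := by ring
          _ = _ := by
              rw [MvPolynomial.monomial_mul, ← MvPolynomial.C_mul, ← MvPolynomial.C_mul,
                MvPolynomial.C_mul_monomial, mul_one, mul_one]
      rw [Finset.sum_congr rfl hterm, Tri_sum]
      push_cast
      rw [finsum_decomp A k r n hn, Finset.mul_sum]
      refine Finset.sum_congr rfl fun d hd => ?_
      rw [Finset.mem_piAntidiag] at hd
      have hsum' : (∑ i : Fin k, (r (Fin.castSucc i) + d i)) = k := by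
        have hd1 : ∑ i : Fin k, d i = n := hd.1
        rw [Fin.sum_univ_castSucc] at hsum
        rw [Finset.sum_add_distrib]
        omega
      rw [ih A _ _ hsum']
      have hm : ((∏ i : Fin k, Nat.factorial (d i) : ℕ) : ℚ) *
          (Nat.multinomial Finset.univ d : ℚ) = (Nat.factorial n : ℚ) := by
        have := Nat.multinomial_spec (Finset.univ : Finset (Fin k)) d
        rw [hd.1] at this
        exact_mod_cast congrArg (Nat.cast : ℕ → ℚ) this
      have hQ : ((∏ i : Fin k, Nat.factorial (d i) : ℕ) : ℚ) ≠ 0 := by positivity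
      push_cast at hm ⊢
      rw [Finset.prod_div_distrib]
      field_simp
      ring_nf
      ring_nf at hm
      rw [← hm]
      ring

/-- Corollary 2: the closed formula for the triangular operator.
`C(r_1,…,r_k)` is the set of strictly upper triangular matrices `(c_{i,j})` of
nonnegative integers with `Σ_s c_{s,i} = r_i − 1 + Σ_j c_{i,j}` for all `i`, and

`T_A(x_1^{r_1}⋯x_k^{r_k}) = Σ_{c ∈ C} Π_j (Σ_i c_{i,j})! · Π_{i,j} a_{i,j}^{c_{i,j}}/c_{i,j}!`. -/
theorem triangular_operator_closed_formula
    (k : ℕ) (A : ℕ → ℕ → ℤ) (hA : ∀ i j, j ≤ i → A i j = 0)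
    (r : Fin k → ℕ) (hsum : ∑ i, r i = k) :
    (Tri k A (∏ j, MvPolynomial.X j ^ r j) : ℚ) =
      ∑ᶠ c ∈ {c : Fin k → Fin k → ℕ |
          (∀ i j : Fin k, j ≤ i → c i j = 0) ∧
          ∀ i : Fin k, (∑ s, (c s i : ℤ)) = (r i : ℤ) - 1 + ∑ j, (c i j : ℤ)},
        (∏ j : Fin k, (Nat.factorial (∑ i, c i j) : ℚ)) *
          ∏ i : Fin k, ∏ j : Fin k,
            (A i j : ℚ) ^ (c i j) / (Nat.factorial (c i j) : ℚ) := by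
  rw [prod_X_pow, Tri_monomial_eq k A r 1 hsum, Int.cast_one, one_mul]
  rfl
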